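/- Let Z be a Banach space, X ⊆ Y separable Banach spaces, and T : Y → ℓ^∞(Z) a bounded linear operator with coordinate operators (T_n), i.e., T(y) = (T_n(y))_n. Suppose T(X) ⊆ c_0(Z) and the sequence (T_n) is relatively compact in the strong operator topology on L(Y,Z). Then there exists a bounded linear operator T̃ : Y → c_0(Z) extending T|X with ‖T̃‖ ≤ 2‖T‖. -/

import Mathlib

open Filter Topology ENNReal

noncomputable def c0Submodule (Z : ℕ → Type*) [∀ j, NormedAddCommGroup (Z j)]
    [∀ j, NormedSpace ℝ (Z j)] : Submodule ℝ (lp Z ∞) where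
  carrier := {f | Tendsto (fun j => ‖(f : ∀ j, Z j) j‖) atTop (𝓝 0)}
  add_mem' := by
    intro f g hf hg
    have h := hf.add hg
    rw [add_zero] at h
    refine squeeze_zero (fun j => norm_nonneg _) (fun j => ?_) h
    simp only [lp.coeFn_add, Pi.add_apply]
    exact norm_add_le _ _
  zero_mem' := by
    simp only [Set.mem_setOf_eq, lp.coeFn_zero, Pi.zero_apply, norm_zero]
    exact tendsto_const_nhds
  smul_mem' := by
    intro c f hf
    have h := hf.const_mul ‖c‖
    rw [mul_zero] at h
    refine squeeze_zero (fun j => norm_nonneg _) (fun j => ?_) h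
    simp only [lp.coeFn_smul, Pi.smul_apply]
    rw [norm_smul]

private lemma aux_tendsto_zero {f : ℕ → ℝ} (h0 : ∀ n, 0 ≤ f n)
    (h : ∀ ε > (0 : ℝ), ∀ᶠ n in atTop, f n < ε) : Tendsto f atTop (𝓝 0) :=
  tendsto_order.2 ⟨fun a ha => Eventually.of_forall fun n => lt_of_lt_of_le ha (h0 n),
    fun a ha => h a ha⟩

private lemma aux_freq {f : ℕ → ℝ} (h0 : ∀ n, 0 ≤ f n) (h : ¬ Tendsto f atTop (𝓝 0)) :
    ∃ ε > (0 : ℝ), ∃ᶠ n in atTop, ε ≤ f n := by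
  by_contra hc
  push_neg at hc
  exact h (aux_tendsto_zero h0 (fun ε hε => by
    have := hc ε hε
    filter_upwards [this] with n hn
    exact hn))

theorem stmt9 {Z : Type*} [NormedAddCommGroup Z] [NormedSpace ℝ Z] [CompleteSpace Z]
    {Y : Type*} [NormedAddCommGroup Y] [NormedSpace ℝ Y] [CompleteSpace Y]
    [TopologicalSpace.SeparableSpace Y]
    (X : Subspace ℝ Y) (hX : IsClosed (X : Set Y))
    (T : Y →L[ℝ] lp (fun _ : ℕ => Z) ∞)
    (Tn : ℕ → (Y →L[ℝ] Z)) (hTn : ∀ n y, Tn n y = (T y : ∀ _ : ℕ, Z) n)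
    -- (i) T(X) ⊆ c₀(Z):
    (hTX : ∀ x ∈ X, T x ∈ c0Submodule (fun _ : ℕ => Z))
    -- (ii) (Tₙ) is relatively compact in the strong operator topology:
    (hcpt : ∀ φ : ℕ → ℕ, StrictMono φ → ∃ ψ : ℕ → ℕ, StrictMono ψ ∧
      ∃ S : Y →L[ℝ] Z, ∀ y : Y,
        Tendsto (fun k => ‖Tn (φ (ψ k)) y - S y‖) atTop (𝓝 0)) :
    ∃ T' : Y →L[ℝ] ↥(c0Submodule (fun _ : ℕ => Z)),
      (∀ x ∈ X, (T' x : lp (fun _ : ℕ => Z) ∞) = T x) ∧ ‖T'‖ ≤ 2 * ‖T‖ := by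
  classical
  have hY : Nonempty Y := ⟨0⟩
  obtain ⟨u, hu⟩ := TopologicalSpace.exists_dense_seq Y
  -- pointwise bound on the coordinate operators
  have hTnb : ∀ n y, ‖Tn n y‖ ≤ ‖T‖ * ‖y‖ := fun n y => by
    rw [hTn]
    exact (lp.norm_apply_le_norm ENNReal.top_ne_zero (T y) n).trans (T.le_opNorm y)
  -- the set of SOT subsequential limits of (Tn)
  set L : Set (Y →L[ℝ] Z) := {S | ∃ φ : ℕ → ℕ, StrictMono φ ∧
      ∀ y, Tendsto (fun k => ‖Tn (φ k) y - S y‖) atTop (𝓝 0)} with hLdef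
  have hLlim : ∀ S ∈ L, ∃ φ : ℕ → ℕ, StrictMono φ ∧
      ∀ y, Tendsto (fun k => Tn (φ k) y) atTop (𝓝 (S y)) := by
    rintro S ⟨φ, hφ, hconv⟩
    exact ⟨φ, hφ, fun y => tendsto_iff_norm_sub_tendsto_zero.2 (hconv y)⟩
  have hLnorm : ∀ S ∈ L, ∀ y, ‖S y‖ ≤ ‖T‖ * ‖y‖ := by
    intro S hS y
    obtain ⟨φ, hφ, hconv⟩ := hLlim S hS
    exact le_of_tendsto' (hconv y).norm (fun k => hTnb _ _)
  have hLX : ∀ S ∈ L, ∀ x ∈ X, S x = 0 := by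
    intro S hS x hx
    obtain ⟨φ, hφ, hconv⟩ := hLlim S hS
    have h0 : Tendsto (fun j => ‖(T x : ∀ _ : ℕ, Z) j‖) atTop (𝓝 0) := hTX x hx
    have h1 : Tendsto (fun k => Tn (φ k) x) atTop (𝓝 0) := by
      have := h0.comp hφ.tendsto_atTop
      have h2 : Tendsto (fun k => ‖Tn (φ k) x‖) atTop (𝓝 0) := by
        convert this using 2 with k
        simp [Function.comp, hTn]
      exact tendsto_zero_iff_norm_tendsto_zero.2 h2
    exact tendsto_nhds_unique (hconv x) h1
  have hLne : L.Nonempty := by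
    obtain ⟨ψ, hψ, S, hconv⟩ := hcpt id strictMono_id
    exact ⟨S, ψ, hψ, hconv⟩
  -- weighted coordinates and the gauge g
  set w : ℕ → (Y →L[ℝ] Z) → ℕ → ℝ :=
    fun n S i => (2 : ℝ)⁻¹ ^ i * min 1 ‖Tn n (u i) - S (u i)‖ with hwdef
  have hw0 : ∀ n S i, 0 ≤ w n S i := fun n S i => by
    refine mul_nonneg (by positivity) (le_min zero_le_one (norm_nonneg _))
  have hwle : ∀ n S i, w n S i ≤ (2 : ℝ)⁻¹ ^ i := fun n S i => by
    calc w n S i ≤ (2 : ℝ)⁻¹ ^ i * 1 :=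
          mul_le_mul_of_nonneg_left (min_le_left _ _) (by positivity)
      _ = (2 : ℝ)⁻¹ ^ i := mul_one _
  have hwle' : ∀ n S i, w n S i ≤ ‖Tn n (u i) - S (u i)‖ := fun n S i => by
    calc w n S i ≤ 1 * min 1 ‖Tn n (u i) - S (u i)‖ := by
          refine mul_le_mul_of_nonneg_right ?_ (le_min zero_le_one (norm_nonneg _))
          exact pow_le_one₀ (by norm_num) (by norm_num)
      _ = min 1 ‖Tn n (u i) - S (u i)‖ := one_mul _
      _ ≤ _ := min_le_right _ _
  have hrange_ne : ∀ n : ℕ, (Finset.range (n + 1)).Nonempty := fun n => ⟨0, by simp⟩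
  set g : ℕ → (Y →L[ℝ] Z) → ℝ :=
    fun n S => (Finset.range (n + 1)).sup' (hrange_ne n) (w n S) with hgdef
  have hg0 : ∀ n S, 0 ≤ g n S := fun n S =>
    le_trans (hw0 n S 0) (Finset.le_sup' _ (by simp))
  -- Claim A : along an SOT-convergent subsequence, g tends to 0
  have claimA : ∀ (m : ℕ → ℕ) (S : Y →L[ℝ] Z),
      (∀ y, Tendsto (fun k => ‖Tn (m k) y - S y‖) atTop (𝓝 0)) →
      ∀ ε > (0 : ℝ), ∀ᶠ k in atTop, g (m k) S < ε := by
    intro m S hconv ε hε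
    obtain ⟨N, hN⟩ := exists_pow_lt_of_lt_one hε (show (2 : ℝ)⁻¹ < 1 by norm_num)
    have hfin : (Finset.range (N + 1) : Set ℕ).Finite := (Finset.range (N + 1)).finite_toSet
    have hev : ∀ᶠ k in atTop, ∀ i ∈ (Finset.range (N + 1) : Set ℕ),
        ‖Tn (m k) (u i) - S (u i)‖ < ε := by
      rw [eventually_all_finite hfin]
      intro i _
      exact (hconv (u i)).eventually (gt_mem_nhds hε)
    filter_upwards [hev] with k hk
    rw [hgdef]
    refine (Finset.sup'_lt_iff (hrange_ne _)).2 fun i _ => ?_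
    rcases le_or_gt i N with hi | hi
    · exact lt_of_le_of_lt (hwle' _ _ _) (hk i (by simp [Nat.lt_succ_iff, hi]))
    · refine lt_of_le_of_lt (hwle _ _ _) (lt_of_le_of_lt ?_ hN)
      exact pow_le_pow_of_le_one (by norm_num) (by norm_num) hi.le
  -- the infimum of g over L tends to 0
  set f : ℕ → ℝ := fun n => sInf (g n '' L) with hfdef
  have hf0 : ∀ n, 0 ≤ f n := fun n =>
    Real.sInf_nonneg (by rintro _ ⟨S, _, rfl⟩; exact hg0 n S)
  have hfle : ∀ n, ∀ S ∈ L, f n ≤ g n S := fun n S hS =>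
    csInf_le ⟨0, by rintro _ ⟨S', _, rfl⟩; exact hg0 n S'⟩ ⟨S, hS, rfl⟩
  have hftendsto : Tendsto f atTop (𝓝 0) := by
    by_contra hc
    obtain ⟨ε, hε, hfreq⟩ := aux_freq hf0 hc
    obtain ⟨φ, hφ, hφf⟩ := Filter.extraction_of_frequently_atTop hfreq
    obtain ⟨ψ, hψ, S, hconv⟩ := hcpt φ hφ
    have hSL : S ∈ L := ⟨φ ∘ ψ, hφ.comp hψ, hconv⟩
    have := claimA (φ ∘ ψ) S hconv ε hε
    obtain ⟨k, hk⟩ := this.exists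
    exact absurd (lt_of_le_of_lt (le_trans (hφf (ψ k)) (hfle _ _ hSL)) hk) (lt_irrefl ε)
  -- near-optimal selection Sn
  have hsel : ∀ n : ℕ, ∃ S ∈ L, g n S < f n + 1 / (n + 1) := by
    intro n
    obtain ⟨a, ⟨S, hS, rfl⟩, ha⟩ :=
      Real.lt_sInf_add_pos (hLne.image (g n)) (show (0 : ℝ) < 1 / (n + 1) by positivity)
    exact ⟨S, hS, ha⟩
  choose Sn hSnL hSn using hsel
  have hgS : Tendsto (fun n => g n (Sn n)) atTop (𝓝 0) := by
    have h1 : Tendsto (fun n : ℕ => f n + 1 / (n + 1)) atTop (𝓝 0) := by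
      have := hftendsto.add tendsto_one_div_add_atTop_nhds_zero_nat
      rwa [add_zero] at this
    exact squeeze_zero (fun n => hg0 _ _) (fun n => (hSn n).le) h1
  -- coordinatewise convergence on the dense sequence
  have hcoord : ∀ i, Tendsto (fun n => ‖Tn n (u i) - Sn n (u i)‖) atTop (𝓝 0) := by
    intro i
    refine aux_tendsto_zero (fun n => norm_nonneg _) fun ε hε => ?_
    have hδ : (0 : ℝ) < (2 : ℝ)⁻¹ ^ i * min 1 (ε / 2) := by positivity
    have hev := hgS.eventually (gt_mem_nhds hδ)
    filter_upwards [hev, eventually_ge_atTop i] with n hn hni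
    have hmem : i ∈ Finset.range (n + 1) := by simp [Nat.lt_succ_iff, hni]
    have hle : w n (Sn n) i ≤ g n (Sn n) := Finset.le_sup' _ hmem
    have h2 : min 1 ‖Tn n (u i) - Sn n (u i)‖ < min 1 (ε / 2) := by
      have := lt_of_le_of_lt hle hn
      rw [hwdef] at this
      have hp : (0 : ℝ) < (2 : ℝ)⁻¹ ^ i := by positivity
      exact lt_of_mul_lt_mul_left this hp.le
    by_contra hcon
    push_neg at hcon
    have : min 1 (ε / 2) ≤ ‖Tn n (u i) - Sn n (u i)‖ :=
      le_trans (min_le_of_right_le (by linarith)) le_rfl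
    have : min 1 (min 1 (ε / 2)) ≤ min 1 ‖Tn n (u i) - Sn n (u i)‖ :=
      min_le_min le_rfl this
    rw [min_eq_right (min_le_left _ _)] at this
    exact absurd (lt_of_le_of_lt this h2) (lt_irrefl _)
  -- convergence for every y
  have hall : ∀ y, Tendsto (fun n => ‖Tn n y - Sn n y‖) atTop (𝓝 0) := by
    intro y
    refine aux_tendsto_zero (fun n => norm_nonneg _) fun ε hε => ?_
    set C : ℝ := 2 * ‖T‖ + 1 with hC
    have hCpos : (0 : ℝ) < C := by positivity
    obtain ⟨i, hi⟩ := Metric.denseRange_iff.mp hu y (ε / (4 * C)) (by positivity)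
    have hd : ‖y - u i‖ < ε / (4 * C) := by rwa [← dist_eq_norm]
    have hev := (hcoord i).eventually (gt_mem_nhds (half_pos hε))
    filter_upwards [hev] with n hn
    have key : ‖Tn n y - Sn n y‖ ≤
        ‖Tn n (y - u i)‖ + ‖Tn n (u i) - Sn n (u i)‖ + ‖Sn n (u i - y)‖ := by
      have : Tn n y - Sn n y =
          Tn n (y - u i) + (Tn n (u i) - Sn n (u i)) + Sn n (u i - y) := by
        simp only [map_sub]
        abel
      rw [this]
      exact le_trans (norm_add_le _ _) (add_le_add (norm_add_le _ _) le_rfl)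
    have b1 : ‖Tn n (y - u i)‖ ≤ ‖T‖ * ‖y - u i‖ := hTnb _ _
    have b2 : ‖Sn n (u i - y)‖ ≤ ‖T‖ * ‖u i - y‖ := hLnorm _ (hSnL n) _
    rw [norm_sub_rev] at b2
    have hTC : ‖T‖ ≤ C := by rw [hC]; nlinarith [norm_nonneg T]
    have hb : ‖T‖ * ‖y - u i‖ ≤ C * ‖y - u i‖ :=
      mul_le_mul_of_nonneg_right (by nlinarith [norm_nonneg T]) (norm_nonneg _)
    have hsmall : C * ‖y - u i‖ < ε / 4 := by
      calc C * ‖y - u i‖ < C * (ε / (4 * C)) := mul_lt_mul_of_pos_left hd hCpos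
        _ = ε / 4 := by field_simp
    calc ‖Tn n y - Sn n y‖ ≤ ‖Tn n (y - u i)‖ + ‖Tn n (u i) - Sn n (u i)‖ +
          ‖Sn n (u i - y)‖ := key
      _ ≤ C * ‖y - u i‖ + ‖Tn n (u i) - Sn n (u i)‖ + C * ‖y - u i‖ := by
          gcongr <;> [exact le_trans b1 hb; exact le_trans b2 hb]
      _ < ε / 4 + ε / 2 + ε / 4 := by gcongr
      _ ≤ ε := by linarith
  -- construct the extension operator
  have hbd : ∀ (y : Y) (n : ℕ), ‖Tn n y - Sn n y‖ ≤ 2 * ‖T‖ * ‖y‖ := by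
    intro y n
    calc ‖Tn n y - Sn n y‖ ≤ ‖Tn n y‖ + ‖Sn n y‖ := norm_sub_le _ _
      _ ≤ ‖T‖ * ‖y‖ + ‖T‖ * ‖y‖ := add_le_add (hTnb n y) (hLnorm _ (hSnL n) y)
      _ = 2 * ‖T‖ * ‖y‖ := by ring
  have hmem : ∀ y : Y, Memℓp (fun n => Tn n y - Sn n y) ∞ := by
    intro y
    apply memℓp_infty
    refine ⟨2 * ‖T‖ * ‖y‖, ?_⟩
    rintro _ ⟨n, rfl⟩
    exact hbd y n
  set F : Y →ₗ[ℝ] lp (fun _ : ℕ => Z) ∞ :=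
    { toFun := fun y => ⟨fun n => Tn n y - Sn n y, hmem y⟩
      map_add' := by
        intro y z
        apply Subtype.ext
        funext n
        show Tn n (y + z) - Sn n (y + z) = (Tn n y - Sn n y) + (Tn n z - Sn n z)
        simp only [map_add]; abel
      map_smul' := by
        intro c y
        apply Subtype.ext
        funext n
        show Tn n (c • y) - Sn n (c • y) = c • (Tn n y - Sn n y)
        simp only [map_smul, smul_sub] } with hFdef
  have hFbound : ∀ y, ‖F y‖ ≤ 2 * ‖T‖ * ‖y‖ := by
    intro y
    refine lp.norm_le_of_forall_le (by positivity) fun n => ?_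
    exact hbd y n
  set T2 : Y →L[ℝ] lp (fun _ : ℕ => Z) ∞ := F.mkContinuous (2 * ‖T‖) hFbound with hT2def
  have hT2app : ∀ y, T2 y = F y := fun y => rfl
  have hmemc0 : ∀ y : Y, T2 y ∈ c0Submodule (fun _ : ℕ => Z) := fun y => hall y
  refine ⟨T2.codRestrict (c0Submodule _) hmemc0, ?_, ?_⟩
  · intro x hx
    show T2 x = T x
    apply Subtype.ext
    funext n
    show Tn n x - Sn n x = (T x : ∀ _ : ℕ, Z) n
    rw [hLX _ (hSnL n) x hx, sub_zero, hTn]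
  · refine ContinuousLinearMap.opNorm_le_bound _ (by positivity) fun y => ?_
    have h1 : ‖(T2.codRestrict (c0Submodule (fun _ : ℕ => Z)) hmemc0) y‖ = ‖T2 y‖ := rfl
    rw [h1]
    exact hFbound y
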